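/- If (E_1,…,E_d) is a packing class for (V,w), and w' : V → [0,1]^d is a size function such that for every i ∈ {1,…,d}, every S ⊆ V with ∑_{b∈S} w_i(b) ≤ 1 satisfies ∑_{b∈S} w'_i(b) ≤ 1, then for every i ∈ {1,…,d} and every S ⊆ V, the induced subgraph G_i[S] of the i-th component graph contains a clique of cardinality ⌈∑_{b∈S} w'_i(b)⌉. -/

import Mathlib

/-- `G` is an interval graph: there are open intervals `(a v, b v)` such that two
distinct vertices are adjacent iff their intervals intersect. -/
def IsIntervalGraph {V : Type*} (G : SimpleGraph V) : Prop :=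
  ∃ a b : V → ℝ, (∀ v, a v < b v) ∧
    ∀ u v : V, u ≠ v →
      (G.Adj u v ↔ (Set.Ioo (a u) (b u) ∩ Set.Ioo (a v) (b v)).Nonempty)

/-- A *packing class* for `(V, w)`: a `d`-tuple of graphs `G i` on `V` such that
(P1) each `G i` is an interval graph, (P2) every stable set of `G i` is `i`-feasible,
and (P3) no two distinct vertices are adjacent in all `d` graphs. -/
def IsPackingClass {V : Type*} [Fintype V] {d : ℕ} (w : V → Fin d → ℝ)
    (G : Fin d → SimpleGraph V) : Prop :=
  (∀ i, IsIntervalGraph (G i)) ∧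
  (∀ (i : Fin d) (S : Finset V),
    (∀ u ∈ S, ∀ v ∈ S, u ≠ v → ¬ (G i).Adj u v) → ∑ b ∈ S, w b i ≤ 1) ∧
  (∀ u v : V, u ≠ v → ∃ i, ¬ (G i).Adj u v)

/-- Two neighbours of the vertex with rightmost left endpoint are adjacent. -/
lemma adj_of_common_nbhd {V : Type*} (G : SimpleGraph V) (a b : V → ℝ)
    (hadj : ∀ u v : V, u ≠ v →
      (G.Adj u v ↔ (Set.Ioo (a u) (b u) ∩ Set.Ioo (a v) (b v)).Nonempty))
    (v x y : V) (hxv : a x ≤ a v) (hyv : a y ≤ a v)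
    (hx : G.Adj x v) (hy : G.Adj y v) (hxy : x ≠ y) : G.Adj x y := by
  obtain ⟨tx, htx⟩ := (hadj x v hx.ne).1 hx
  obtain ⟨ty, hty⟩ := (hadj y v hy.ne).1 hy
  simp only [Set.mem_inter_iff, Set.mem_Ioo] at htx hty
  have hvbx : a v < b x := lt_of_le_of_lt (le_of_lt htx.2.1) htx.1.2
  have hvby : a v < b y := lt_of_le_of_lt (le_of_lt hty.2.1) hty.1.2
  refine (hadj x y hxy).2 ⟨(a v + min (b x) (b y)) / 2, ?_, ?_⟩ <;>
    simp only [Set.mem_Ioo] <;> constructor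
  · calc a x ≤ a v := hxv
      _ < _ := by have := lt_min hvbx hvby; linarith
  · have h1 : min (b x) (b y) ≤ b x := min_le_left _ _
    have := lt_min hvbx hvby; linarith
  · calc a y ≤ a v := hyv
      _ < _ := by have := lt_min hvbx hvby; linarith
  · have h1 : min (b x) (b y) ≤ b y := min_le_right _ _
    have := lt_min hvbx hvby; linarith

/-- Greedy colouring of an interval graph: if all cliques inside `S` have at most `n`
vertices, `S` can be properly coloured with `n` colours. -/
lemma interval_coloring {V : Type*} (G : SimpleGraph V) (a b : V → ℝ)
    (hadj : ∀ u v : V, u ≠ v →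
      (G.Adj u v ↔ (Set.Ioo (a u) (b u) ∩ Set.Ioo (a v) (b v)).Nonempty))
    (n : ℕ) (S : Finset V)
    (hcl : ∀ T : Finset V, T ⊆ S → G.IsClique (T : Set V) → T.card ≤ n) :
    ∃ c : V → ℕ, (∀ v ∈ S, c v < n) ∧
      ∀ u ∈ S, ∀ v ∈ S, c u = c v → u ≠ v → ¬ G.Adj u v := by
  classical
  induction S using Finset.strongInduction with
  | _ S ih =>
    rcases S.eq_empty_or_nonempty with rfl | hS
    · exact ⟨fun _ => 0, by simp, by simp⟩
    obtain ⟨v, hvS, hv⟩ := S.exists_max_image a hS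
    set S' := S.erase v with hS'
    obtain ⟨c, hc1, hc2⟩ := ih S' (Finset.erase_ssubset hvS)
      (fun T hT hTc => hcl T (hT.trans (Finset.erase_subset _ _)) hTc)
    set N := S'.filter (fun u => G.Adj u v) with hNdef
    have hNS' : N ⊆ S' := Finset.filter_subset _ _
    have hNadj : ∀ u ∈ N, G.Adj u v := fun u hu => (Finset.mem_filter.1 hu).2
    have hclique : G.IsClique ((insert v N : Finset V) : Set V) := by
      intro x hx y hy hxy
      simp only [Finset.coe_insert, Set.mem_insert_iff, Finset.mem_coe] at hx hy
      have hax : ∀ u ∈ N, a u ≤ a v := fun u hu =>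
        hv u (Finset.mem_of_mem_erase (hNS' hu))
      rcases hx with rfl | hx
      · rcases hy with rfl | hy
        · exact absurd rfl hxy
        · exact (hNadj y hy).symm
      · rcases hy with rfl | hy
        · exact hNadj x hx
        · exact adj_of_common_nbhd G a b hadj v x y (hax x hx) (hax y hy)
            (hNadj x hx) (hNadj y hy) hxy
    have hvN : v ∉ N := fun h => (G.loopless.irrefl v) (hNadj v h)
    have hcard : (insert v N).card ≤ n := by
      refine hcl _ ?_ hclique
      intro x hx
      rcases Finset.mem_insert.1 hx with rfl | hx
      · exact hvS
      · exact Finset.mem_of_mem_erase (hNS' hx)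
    have hNcard : N.card < n := by
      rw [Finset.card_insert_of_notMem hvN] at hcard; omega
    have himg : N.image c ⊆ Finset.range n := by
      intro j hj
      obtain ⟨u, hu, rfl⟩ := Finset.mem_image.1 hj
      exact Finset.mem_range.2 (hc1 u (hNS' hu))
    have hlt : (N.image c).card < (Finset.range n).card := by
      rw [Finset.card_range]
      exact lt_of_le_of_lt Finset.card_image_le hNcard
    have hss : N.image c ⊂ Finset.range n :=
      himg.ssubset_of_ne (fun h => by rw [h] at hlt; exact lt_irrefl _ hlt)
    obtain ⟨j, hjn, hjN⟩ := Finset.exists_of_ssubset hss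
    refine ⟨Function.update c v j, ?_, ?_⟩
    · intro u hu
      rcases eq_or_ne u v with rfl | huv
      · simpa using Finset.mem_range.1 hjn
      · rw [Function.update_of_ne huv]
        exact hc1 u (Finset.mem_erase.2 ⟨huv, hu⟩)
    · intro x hx y hy hcxy hxy hAdj
      rcases eq_or_ne x v with hxv | hxv
      · rcases eq_or_ne y v with hyv | hyv
        · exact hxy (hxv.trans hyv.symm)
        · rw [hxv, Function.update_self, Function.update_of_ne hyv] at hcxy
          have hyN : y ∈ N := Finset.mem_filter.2
            ⟨Finset.mem_erase.2 ⟨hyv, hy⟩, by rw [hxv] at hAdj; exact hAdj.symm⟩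
          exact hjN (Finset.mem_image.2 ⟨y, hyN, hcxy.symm⟩)
      · rcases eq_or_ne y v with hyv | hyv
        · rw [hyv, Function.update_self, Function.update_of_ne hxv] at hcxy
          have hxN : x ∈ N := Finset.mem_filter.2
            ⟨Finset.mem_erase.2 ⟨hxv, hx⟩, by rw [hyv] at hAdj; exact hAdj⟩
          exact hjN (Finset.mem_image.2 ⟨x, hxN, hcxy⟩)
        · rw [Function.update_of_ne hxv, Function.update_of_ne hyv] at hcxy
          exact hc2 x (Finset.mem_erase.2 ⟨hxv, hx⟩) y
            (Finset.mem_erase.2 ⟨hyv, hy⟩) hcxy hxy hAdj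

/-- If `(G₁,…,G_d)` is a packing class for `(V,w)` and `w'` is a conservative scale for
`(V,w)`, then for every coordinate `i` and every set `S ⊆ V`, the induced subgraph
`Gᵢ[S]` contains a clique of cardinality `⌈∑_{b ∈ S} w'ᵢ(b)⌉`. -/
theorem packingClass_clique_bound {V : Type*} [Fintype V] {d : ℕ}
    (w w' : V → Fin d → ℝ)
    (hw : ∀ b i, w b i ∈ Set.Icc (0 : ℝ) 1) (hw' : ∀ b i, w' b i ∈ Set.Icc (0 : ℝ) 1)
    (hsub : ∀ (i : Fin d) (S : Finset V),
      ∑ b ∈ S, w b i ≤ 1 → ∑ b ∈ S, w' b i ≤ 1)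
    (G : Fin d → SimpleGraph V) (hG : IsPackingClass w G) :
    ∀ (i : Fin d) (S : Finset V), ∃ T : Finset V, T ⊆ S ∧
      (G i).IsClique (T : Set V) ∧ (T.card : ℤ) = ⌈∑ b ∈ S, w' b i⌉ := by
  classical
  intro i S
  obtain ⟨a, b, hab, hadj⟩ := hG.1 i
  set s := ∑ b ∈ S, w' b i with hs
  have hs0 : 0 ≤ s := Finset.sum_nonneg fun x _ => (hw' x i).1
  have hceil0 : 0 ≤ ⌈s⌉ := Int.ceil_nonneg hs0
  set m := (⌈s⌉).toNat with hm
  have hmz : (m : ℤ) = ⌈s⌉ := Int.toNat_of_nonneg hceil0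
  -- key: the sum is bounded by n whenever all cliques in S have size ≤ n
  have key : ∀ n : ℕ,
      (∀ T : Finset V, T ⊆ S → (G i).IsClique (T : Set V) → T.card ≤ n) → s ≤ n := by
    intro n hcl
    obtain ⟨c, hc1, hc2⟩ := interval_coloring (G i) a b hadj n S hcl
    have hmaps : ∀ x ∈ S, c x ∈ Finset.range n := fun x hx =>
      Finset.mem_range.2 (hc1 x hx)
    calc s = ∑ j ∈ Finset.range n, ∑ x ∈ S.filter (fun x => c x = j), w' x i := by
            rw [hs, Finset.sum_fiberwise_of_maps_to hmaps]
      _ ≤ ∑ _j ∈ Finset.range n, (1 : ℝ) := by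
            refine Finset.sum_le_sum fun j _ => ?_
            refine hsub i _ (hG.2.1 i _ ?_)
            intro u hu v hv huv
            exact hc2 u (Finset.mem_of_mem_filter _ hu)
              v (Finset.mem_of_mem_filter _ hv)
              (by rw [(Finset.mem_filter.1 hu).2, (Finset.mem_filter.1 hv).2]) huv
      _ = n := by simp
  -- there is a clique of size at least m
  have hbig : ∃ T : Finset V, T ⊆ S ∧ (G i).IsClique (T : Set V) ∧ m ≤ T.card := by
    rcases Nat.eq_zero_or_pos m with hm0 | hm0
    · exact ⟨∅, Finset.empty_subset _, by simp [SimpleGraph.IsClique], by omega⟩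
    · by_contra h
      push_neg at h
      have hcl : ∀ T : Finset V, T ⊆ S → (G i).IsClique (T : Set V) →
          T.card ≤ m - 1 := by
        intro T hT hTc
        have := h T hT hTc
        omega
      have h1 : s ≤ (m : ℝ) - 1 := by
        have hk := key (m - 1) hcl
        rwa [Nat.cast_sub hm0, Nat.cast_one] at hk
      have h2 : ⌈s⌉ ≤ (m : ℤ) - 1 := Int.ceil_le.2 (by push_cast; linarith)
      omega
  obtain ⟨T, hTS, hTc, hTm⟩ := hbig
  obtain ⟨T', hT'T, hT'⟩ := Finset.exists_subset_card_eq hTm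
  refine ⟨T', hT'T.trans hTS, hTc.subset (by exact_mod_cast hT'T), ?_⟩
  rw [hT', hmz]
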